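/- The sweep map is injective on (kn,n)-Dyck paths: two (kn,n)-Dyck paths with the same sweep map output word σ are equal. -/

import Mathlib

def level (k n : ℕ) (p : List Bool) : ℤ :=
  (k * n : ℤ) * p.count true - (n : ℤ) * p.count false

def IsDyck (k n : ℕ) (p : List Bool) : Prop :=
  p.count true = n ∧ p.count false = k * n ∧ ∀ i ≤ p.length, 0 ≤ level k n (p.take i)

/-- reduced level of the prefix of length `i` -/
def rl (k : ℕ) (p : List Bool) (i : ℕ) : ℤ :=
  (k : ℤ) * ((p.take i).count true : ℤ) - ((p.take i).count false : ℤ)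

lemma level_take (k n : ℕ) (p : List Bool) (i : ℕ) :
    level k n (p.take i) = (n : ℤ) * rl k p i := by
  simp [level, rl]; ring

lemma rl_zero (k : ℕ) (p : List Bool) : rl k p 0 = 0 := by simp [rl]

lemma rl_succ (k : ℕ) (p : List Bool) (i : ℕ) (h : i < p.length) :
    rl k p (i + 1) = rl k p i + (if p.getD i true then (k : ℤ) else -1) := by
  have : p.take (i+1) = p.take i ++ [p.getD i true] := by
    rw [List.getD_eq_getElem _ _ h, List.take_succ, List.getElem?_eq_getElem h]
    rfl
  rw [rl, rl, this]
  rcases hb : p.getD i true <;> simp [List.count_append, hb] <;> push_cast <;> ring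

lemma rl_of_ge (k : ℕ) (p : List Bool) (i : ℕ) (h : p.length ≤ i) :
    rl k p i = (k : ℤ) * (p.count true : ℤ) - (p.count false : ℤ) := by
  rw [rl, List.take_of_length_le h]

section Dyck
variable {k n : ℕ} {p : List Bool} (hn : 0 < n) (hp : IsDyck k n p)
include hn hp

lemma rl_total (i : ℕ) (h : p.length ≤ i) : rl k p i = 0 := by
  rw [rl_of_ge _ _ _ h, hp.1, hp.2.1]; push_cast; ring

lemma rl_nonneg (i : ℕ) : 0 ≤ rl k p i := by
  rcases le_or_gt i p.length with h | h
  · have := hp.2.2 i h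
    rw [level_take] at this
    exact nonneg_of_mul_nonneg_right this (by exact_mod_cast hn)
  · rw [rl_total hn hp i h.le]

end Dyck

section Dyck2
variable {k n : ℕ} {p : List Bool} (hn : 0 < n) (hp : IsDyck k n p)
include hn hp

/-- If the level exceeds `v ≥ 1` at time `i`, some later step starts exactly at level `v`. -/
lemma reach (v : ℤ) (hv : 1 ≤ v) (i : ℕ) (hi : v < rl k p i) :
    ∃ j, i < j ∧ j < p.length ∧ rl k p j = v := by
  have hP : ∃ j, i < j ∧ rl k p j ≤ v := by
    refine ⟨i + p.length + 1, by omega, ?_⟩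
    rw [rl_total hn hp _ (by omega)]; omega
  classical
  set j := Nat.find hP with hjdef
  obtain ⟨hij, hjv⟩ := Nat.find_spec hP
  have hmin : ∀ m, m < j → ¬ (i < m ∧ rl k p m ≤ v) := fun m hm => Nat.find_min hP hm
  have hj1 : i < j := hij
  have hprev : v < rl k p (j - 1) := by
    rcases Nat.lt_or_ge (j - 1) (i + 1) with h | h
    · have : j - 1 = i := by omega
      rw [this]; exact hi
    · have := hmin (j - 1) (by omega)
      push_neg at this
      have := this (by omega)
      omega
  have hjL : j - 1 < p.length := by
    by_contra hc
    push_neg at hc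
    rw [rl_total hn hp _ hc] at hprev; omega
  have hstep := rl_succ k p (j - 1) hjL
  have hj' : j - 1 + 1 = j := by omega
  rw [hj'] at hstep
  have hjv' : rl k p j ≤ v := hjv
  rcases hb : p.getD (j - 1) true
  · rw [hb] at hstep
    simp only [Bool.false_eq_true, if_false] at hstep
    have hrj : rl k p j = v := by omega
    refine ⟨j, hj1, ?_, hrj⟩
    by_contra hc
    push_neg at hc
    rw [rl_total hn hp _ hc] at hrj; omega
  · rw [hb] at hstep
    simp only [if_true] at hstep
    have : (0:ℤ) ≤ (k:ℤ) := by positivity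
    omega
end Dyck2

open Finset in
/-- split a filter-count along a disjoint pointwise disjunction -/
lemma card_split (s : Finset ℕ) (P Q R : ℕ → Prop) [DecidablePred P] [DecidablePred Q]
    [DecidablePred R] (h : ∀ i ∈ s, P i ↔ (Q i ∨ R i)) (hd : ∀ i, ¬(Q i ∧ R i)) :
    (s.filter P).card = (s.filter Q).card + (s.filter R).card := by
  have : s.filter P = s.filter Q ∪ s.filter R := by
    ext i
    simp only [Finset.mem_filter, Finset.mem_union]
    constructor
    · rintro ⟨hi, hPi⟩
      rcases (h i hi).1 hPi with hq | hr
      · exact Or.inl ⟨hi, hq⟩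
      · exact Or.inr ⟨hi, hr⟩
    · rintro (⟨hi, hq⟩ | ⟨hi, hr⟩) <;> exact ⟨‹i ∈ s›, (h i ‹i ∈ s›).2 (by tauto)⟩
  rw [this, Finset.card_union_of_disjoint]
  rw [Finset.disjoint_filter]
  intro i _ hq hr
  exact hd i ⟨hq, hr⟩

/-- number of steps with start level `< v` -/
def TT (k : ℕ) (p : List Bool) (v : ℕ) : ℕ :=
  ((Finset.range p.length).filter (fun i => rl k p i < (v : ℤ))).card

/-- number of north steps with start level `< v` -/
def NN (k : ℕ) (p : List Bool) (v : ℕ) : ℕ :=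
  ((Finset.range p.length).filter (fun i => rl k p i < (v : ℤ) ∧ p.getD i true = true)).card

/-- number of east steps with start level `< v` -/
def EE (k : ℕ) (p : List Bool) (v : ℕ) : ℕ :=
  ((Finset.range p.length).filter (fun i => rl k p i < (v : ℤ) ∧ p.getD i true = false)).card

lemma TT_eq (k : ℕ) (p : List Bool) (v : ℕ) : TT k p v = NN k p v + EE k p v := by
  apply card_split
  · intro i _
    rcases hb : p.getD i true <;> simp [hb]
  · rintro i ⟨⟨_, h1⟩, ⟨_, h2⟩⟩; rw [h1] at h2; simp at h2

lemma TT_mono (k : ℕ) (p : List Bool) {v w : ℕ} (h : v ≤ w) : TT k p v ≤ TT k p w := by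
  apply Finset.card_le_card
  apply Finset.monotone_filter_right
  intro i hi
  have : (v:ℤ) ≤ w := by exact_mod_cast h
  omega

lemma NN_mono (k : ℕ) (p : List Bool) {v w : ℕ} (h : v ≤ w) : NN k p v ≤ NN k p w := by
  apply Finset.card_le_card
  apply Finset.monotone_filter_right
  intro i
  have : (v:ℤ) ≤ w := by exact_mod_cast h
  exact fun _ ⟨h1, h2⟩ => ⟨by omega, h2⟩

lemma TT_le_length (k : ℕ) (p : List Bool) (v : ℕ) : TT k p v ≤ p.length := by
  simpa [TT] using Finset.card_le_card (Finset.filter_subset _ (Finset.range p.length))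

section Cross
variable {k n : ℕ} {p : List Bool} (hn : 0 < n) (hp : IsDyck k n p)
include hn hp

lemma cross_sum (v : ℕ) (hv : 1 ≤ v) : ∀ m, m ≤ p.length →
    (∑ i ∈ Finset.range m,
      ((if ((v:ℤ) - k ≤ rl k p i ∧ rl k p i < v ∧ p.getD i true = true) then (1:ℤ) else 0)
        - (if (rl k p i = v ∧ p.getD i true = false) then (1:ℤ) else 0)))
    = (if (v:ℤ) ≤ rl k p m then 1 else 0) := by
  intro m
  induction m with
  | zero =>
    intro _
    rw [Finset.range_zero, Finset.sum_empty, rl_zero]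
    have : ¬ ((v:ℤ) ≤ 0) := by exact_mod_cast by omega
    simp [this]; omega
  | succ m ih =>
    intro hm
    have hmL : m < p.length := by omega
    rw [Finset.sum_range_succ, ih (by omega)]
    have hstep := rl_succ k p m hmL
    rcases hb : p.getD m true
    · rw [hb] at hstep
      simp only [Bool.false_eq_true, if_false] at hstep
      simp only [hb, hstep, Bool.false_eq_true, and_false, if_false, eq_self_iff_true, and_true]
      have h0 : (0:ℤ) ≤ (k:ℤ) := by positivity
      split_ifs <;> omega
    · rw [hb] at hstep
      simp only [if_true] at hstep
      simp only [hb, hstep, Bool.true_eq_false, and_false, if_false, eq_self_iff_true, and_true]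
      have h0 : (0:ℤ) ≤ (k:ℤ) := by positivity
      split_ifs <;> omega

lemma crossing (v : ℕ) (hv : 1 ≤ v) :
    EE k p (v+1) + NN k p (v - k) = EE k p v + NN k p v := by
  -- card of window N equals card of level-v E
  have hsum := cross_sum hn hp v hv p.length (le_refl _)
  rw [rl_total hn hp _ (le_refl _)] at hsum
  have hv0 : ¬ ((v:ℤ) ≤ 0) := by exact_mod_cast by omega
  rw [if_neg hv0, Finset.sum_sub_distrib, Finset.sum_boole, Finset.sum_boole, sub_eq_zero] at hsum
  have hDU : ((Finset.range p.length).filter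
        (fun i => (v:ℤ) - k ≤ rl k p i ∧ rl k p i < v ∧ p.getD i true = true)).card
      = ((Finset.range p.length).filter
        (fun i => rl k p i = (v:ℤ) ∧ p.getD i true = false)).card := by
    exact_mod_cast hsum
  have h1 : EE k p (v+1) = EE k p v + ((Finset.range p.length).filter
      (fun i => rl k p i = (v:ℤ) ∧ p.getD i true = false)).card := by
    apply card_split
    · intro i _
      push_cast
      constructor
      · rintro ⟨h1, h2⟩
        rcases eq_or_lt_of_le (by omega : rl k p i ≤ (v:ℤ)) with he | hl
        · exact Or.inr ⟨he, h2⟩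
        · exact Or.inl ⟨by omega, h2⟩
      · rintro (⟨h1, h2⟩ | ⟨h1, h2⟩) <;> exact ⟨by omega, h2⟩
    · rintro i ⟨⟨ha, _⟩, ⟨hb', _⟩⟩; omega
  have h2 : NN k p v = NN k p (v - k) + ((Finset.range p.length).filter
      (fun i => (v:ℤ) - k ≤ rl k p i ∧ rl k p i < v ∧ p.getD i true = true)).card := by
    apply card_split
    · intro i hi
      have h0 : 0 ≤ rl k p i := rl_nonneg hn hp i
      constructor
      · rintro ⟨ha, hb⟩
        rcases le_or_gt ((v:ℤ) - k) (rl k p i) with h | h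
        · exact Or.inr ⟨h, ha, hb⟩
        · exact Or.inl ⟨by omega, hb⟩
      · rintro (⟨ha, hb⟩ | ⟨ha, hb, hc'⟩) <;> refine ⟨by omega, by assumption⟩
    · rintro i ⟨⟨h1, _⟩, ⟨h2, _, _⟩⟩
      have h0 := rl_nonneg hn hp i
      omega
  omega

end Cross

def sweep (k n : ℕ) (p : List Bool) : List (ℤ × Bool) :=
  ((List.range p.length).reverse.map fun i => (level k n (p.take i), p.getD i true)).mergeSort
    fun a b => decide (a.1 ≤ b.1)

def sweepWord (k n : ℕ) (p : List Bool) : List Bool :=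
  (sweep k n p).map Prod.snd

/-- the labelled input list of the sweep map -/
def inp (k n : ℕ) (p : List Bool) : List (ℤ × Bool) :=
  (List.range p.length).reverse.map fun i => (level k n (p.take i), p.getD i true)

lemma sweep_eq (k n : ℕ) (p : List Bool) :
    sweep k n p = (inp k n p).mergeSort (fun a b => decide (a.1 ≤ b.1)) := rfl

lemma sweep_perm (k n : ℕ) (p : List Bool) : (sweep k n p).Perm (inp k n p) :=
  List.mergeSort_perm _ _

lemma sweep_sorted (k n : ℕ) (p : List Bool) :
    (sweep k n p).Pairwise (fun a b => a.1 ≤ b.1) := by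
  have := List.pairwise_mergeSort (le := fun a b : ℤ × Bool => decide (a.1 ≤ b.1))
    (fun a b c hab hbc => by simp_all; omega)
    (fun a b => by simp; omega) (inp k n p)
  rw [← sweep_eq] at this
  exact this.imp (fun h => by simpa using h)

lemma stable_filter (k n : ℕ) (p : List Bool) (c : ℤ) :
    (sweep k n p).filter (fun a => decide (a.1 = c)) =
      (inp k n p).filter (fun a => decide (a.1 = c)) := by
  set F := (inp k n p).filter (fun a => decide (a.1 = c)) with hF
  have hmemF : ∀ a ∈ F, a.1 = c := by
    intro a ha
    have := List.of_mem_filter ha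
    simpa using this
  have hpw : F.Pairwise (fun a b : ℤ × Bool => decide (a.1 ≤ b.1) = true) := by
    apply List.pairwise_of_forall_mem_list
    intro a ha b hb
    simp [hmemF a ha, hmemF b hb]
  have hsub : F.Sublist (sweep k n p) := by
    rw [sweep_eq]
    exact List.sublist_mergeSort (fun a b c hab hbc => by simp_all; omega)
      (fun a b => by simp; omega) hpw List.filter_sublist
  have hsub2 : F.Sublist ((sweep k n p).filter (fun a => decide (a.1 = c))) := by
    have : F = F.filter (fun a => decide (a.1 = c)) :=
      (List.filter_eq_self.mpr (fun a ha => by simp [hmemF a ha])).symm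
    rw [this]
    exact List.Sublist.filter _ hsub
  refine (hsub2.eq_of_length ?_).symm
  show (List.filter _ (inp k n p)).length = _
  rw [← List.countP_eq_length_filter, ← List.countP_eq_length_filter]
  exact ((sweep_perm k n p).countP_eq _).symm

lemma sorted_decomp : ∀ (m : List (ℤ × Bool)), m.Pairwise (fun a b => a.1 ≤ b.1) → ∀ c : ℤ,
    m = m.filter (fun a => decide (a.1 < c)) ++ m.filter (fun a => decide (a.1 = c))
      ++ m.filter (fun a => decide (c < a.1))
  | [], _, c => by simp
  | a :: t, hpw, c => by
    rw [List.pairwise_cons] at hpw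
    obtain ⟨h1, h2⟩ := hpw
    have ih := sorted_decomp t h2 c
    rcases lt_trichotomy a.1 c with h | h | h
    · simp only [List.filter_cons, decide_eq_true_eq]
      rw [if_pos h, if_neg (by omega), if_neg (by omega)]
      simpa using ih
    · simp only [List.filter_cons, decide_eq_true_eq]
      rw [if_neg (by omega), if_pos h, if_neg (by omega)]
      have ht : t.filter (fun a => decide (a.1 < c)) = [] := by
        rw [List.filter_eq_nil_iff]
        intro b hb
        have := h1 b hb
        intro hb2
        simp only [decide_eq_true_eq] at hb2
        omega
      have h' : t = t.filter (fun a => decide (a.1 = c)) ++ t.filter (fun a => decide (c < a.1)) := by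
        simpa [ht] using ih
      rw [ht, List.nil_append, List.cons_append, ← h']
    · simp only [List.filter_cons, decide_eq_true_eq]
      rw [if_neg (by omega), if_neg (by omega), if_pos h]
      have ht1 : t.filter (fun a => decide (a.1 < c)) = [] := by
        rw [List.filter_eq_nil_iff]; intro b hb hb2; have := h1 b hb
        simp only [decide_eq_true_eq] at hb2; omega
      have ht2 : t.filter (fun a => decide (a.1 = c)) = [] := by
        rw [List.filter_eq_nil_iff]; intro b hb hb2; have := h1 b hb
        simp only [decide_eq_true_eq] at hb2; omega
      have h' : t = t.filter (fun a => decide (c < a.1)) := by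
        simpa [ht1, ht2] using ih
      rw [ht1, ht2, List.nil_append, List.nil_append, ← h']

lemma countP_range (f : ℕ → Bool) : ∀ m : ℕ,
    (List.range m).countP f = ((Finset.range m).filter (fun i => f i = true)).card
  | 0 => by simp
  | m + 1 => by
    rw [List.range_succ, List.countP_append, countP_range f m, Finset.range_add_one,
      Finset.filter_insert]
    rcases hf : f m <;> simp [hf, Finset.card_insert_of_notMem]

lemma countP_inp (k n : ℕ) (p : List Bool) (f : ℤ × Bool → Bool) :
    (inp k n p).countP f =
      ((Finset.range p.length).filter
        (fun i => f (level k n (p.take i), p.getD i true) = true)).card := by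
  rw [inp, List.countP_map, ← countP_range]
  rw [List.countP_eq_length_filter, List.filter_reverse, List.length_reverse,
    ← List.countP_eq_length_filter]
  rfl

section Bridge
variable {k n : ℕ} {p : List Bool} (hn : 0 < n) (hp : IsDyck k n p)
include hn hp

lemma key_lt (v : ℕ) (i : ℕ) : (level k n (p.take i) < (n:ℤ) * v) ↔ rl k p i < (v:ℤ) := by
  rw [level_take]
  constructor <;> intro h
  · exact lt_of_mul_lt_mul_left h (by positivity)
  · exact mul_lt_mul_of_pos_left h (by exact_mod_cast hn)

lemma key_eq (v : ℕ) (i : ℕ) : (level k n (p.take i) = (n:ℤ) * v) ↔ rl k p i = (v:ℤ) := by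
  rw [level_take]
  constructor <;> intro h
  · exact mul_left_cancel₀ (by exact_mod_cast hn.ne' : (n:ℤ) ≠ 0) h
  · rw [h]

omit hn hp in
lemma sweepWord_eq (k n : ℕ) (p : List Bool) : sweepWord k n p = (sweep k n p).map Prod.snd := rfl

lemma countP_sweep_lt (v : ℕ) :
    (sweep k n p).countP (fun a => decide (a.1 < (n:ℤ) * v)) = TT k p v := by
  rw [(sweep_perm k n p).countP_eq, countP_inp, TT]
  apply congrArg
  apply Finset.filter_congr
  intro i _
  simp only [decide_eq_true_eq]
  exact key_lt hn hp v i

lemma sweep_take_eq (v : ℕ) :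
    (sweep k n p).take (TT k p v) = (sweep k n p).filter (fun a => decide (a.1 < (n:ℤ) * v)) := by
  have hd := sorted_decomp (sweep k n p) (sweep_sorted k n p) ((n:ℤ) * v)
  have hlen : ((sweep k n p).filter (fun a => decide (a.1 < (n:ℤ) * v))).length = TT k p v := by
    rw [← List.countP_eq_length_filter]; exact countP_sweep_lt hn hp v
  conv_lhs => rw [hd]
  rw [List.append_assoc, ← hlen, List.take_left]

lemma count_take_false (v : ℕ) :
    ((sweepWord k n p).take (TT k p v)).count false = EE k p v := by
  rw [sweepWord_eq, ← List.map_take, sweep_take_eq hn hp v, List.count_eq_countP,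
    List.countP_map, List.countP_filter, (sweep_perm k n p).countP_eq, countP_inp, EE]
  apply congrArg
  apply Finset.filter_congr
  intro i _
  simp only [Function.comp, Bool.and_eq_true, decide_eq_true_eq, beq_iff_eq]
  rw [key_lt hn hp v i]
  tauto

lemma count_take_true (v : ℕ) :
    ((sweepWord k n p).take (TT k p v)).count true = NN k p v := by
  rw [sweepWord_eq, ← List.map_take, sweep_take_eq hn hp v, List.count_eq_countP,
    List.countP_map, List.countP_filter, (sweep_perm k n p).countP_eq, countP_inp, NN]
  apply congrArg
  apply Finset.filter_congr
  intro i _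
  simp only [Function.comp, Bool.and_eq_true, decide_eq_true_eq, beq_iff_eq]
  rw [key_lt hn hp v i]
  tauto

end Bridge

section Letter
variable {k n : ℕ} {p : List Bool} (hn : 0 < n) (hp : IsDyck k n p)
include hn hp

lemma TT_zero : TT k p 0 = 0 := by
  rw [TT, Finset.card_eq_zero, Finset.filter_eq_empty_iff]
  intro i _
  have := rl_nonneg hn hp i
  omega

omit hn hp in
lemma length_word : ∀ l : List Bool, l.length = l.count true + l.count false := by
  intro l
  induction l with
  | nil => rfl
  | cons c t ih =>
    rcases c <;> simp only [List.count_cons, List.length_cons, ih] <;> simp <;> omega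

lemma length_eq : p.length = n + k * n := by
  rw [length_word p, hp.1, hp.2.1]

lemma rl_le_kn (i : ℕ) : rl k p i ≤ (k : ℤ) * n := by
  rw [rl]
  have h1 : (p.take i).count true ≤ n := by
    rw [← hp.1]; exact (List.take_sublist i p).count_le true
  have h2 : (0:ℤ) ≤ ((p.take i).count false : ℤ) := by positivity
  have : ((p.take i).count true : ℤ) ≤ (n:ℤ) := by exact_mod_cast h1
  nlinarith [Int.ofNat_nonneg k]

lemma TT_top (v : ℕ) (hv : k * n + 1 ≤ v) : TT k p v = p.length := by
  rw [TT]
  have : (Finset.range p.length).filter (fun i => rl k p i < (v:ℤ)) = Finset.range p.length := by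
    rw [Finset.filter_eq_self]
    intro i _
    have h1 := rl_le_kn hn hp i
    have : ((k * n + 1 : ℕ) : ℤ) ≤ (v:ℤ) := by exact_mod_cast hv
    push_cast at this ⊢
    omega
  rw [this, Finset.card_range]

lemma TT_succ (v : ℕ) : TT k p (v+1) = TT k p v +
    ((Finset.range p.length).filter (fun i => rl k p i = (v:ℤ))).card := by
  apply card_split
  · intro i _
    push_cast
    omega
  · intro i
    omega

lemma block_nonempty (v : ℕ) (hv : 1 ≤ v) (hlt : TT k p v < p.length) :
    TT k p v < TT k p (v+1) := by
  rw [TT_succ hn hp v]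
  rcases Nat.eq_zero_or_pos ((Finset.range p.length).filter (fun i => rl k p i = (v:ℤ))).card
    with hz | hpos
  · exfalso
    rw [Finset.card_eq_zero, Finset.filter_eq_empty_iff] at hz
    -- no step starts at level v; find one at level ≥ v, contradiction via reach
    have hex : ∃ i, i < p.length ∧ ¬ (rl k p i < (v:ℤ)) := by
      by_contra hc
      push_neg at hc
      have : (Finset.range p.length).filter (fun i => rl k p i < (v:ℤ)) = Finset.range p.length := by
        rw [Finset.filter_eq_self]
        intro i hi
        exact hc i (Finset.mem_range.1 hi)
      rw [TT, this, Finset.card_range] at hlt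
      omega
    obtain ⟨i, hiL, hi⟩ := hex
    push_neg at hi
    rcases eq_or_lt_of_le hi with he | hl
    · exact hz (Finset.mem_range.2 hiL) he.symm
    · obtain ⟨j, _, hjL, hj⟩ := reach hn hp (v:ℤ) (by exact_mod_cast hv) i hl
      exact hz (Finset.mem_range.2 hjL) hj
  · omega

lemma letter_lemma (hk : 1 ≤ k) (v : ℕ) (hv : 1 ≤ v) (hne : TT k p v < TT k p (v+1)) :
    (sweepWord k n p).getD (TT k p v) true = false := by
  classical
  set c : ℤ := (n:ℤ) * v with hc
  -- the block at level v, as a list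
  set B := (sweep k n p).filter (fun a => decide (a.1 = c)) with hB
  have hBinp : B = (inp k n p).filter (fun a => decide (a.1 = c)) := stable_filter k n p c
  -- B as mapped filtered reversed range
  have hBmap : B = (((List.range p.length).reverse.filter
      (fun i => decide (rl k p i = (v:ℤ)))).map
        (fun i => (level k n (p.take i), p.getD i true))) := by
    rw [hBinp, inp, List.filter_map]
    congr 1
    apply List.filter_congr
    intro i _
    simp only [Function.comp, decide_eq_true_eq]
    congr 1
    rw [eq_iff_iff]
    exact key_eq hn hp v i
  -- B is nonempty
  have hlenB : B.length = TT k p (v+1) - TT k p v := by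
    rw [hB, ← List.countP_eq_length_filter, (sweep_perm k n p).countP_eq, countP_inp,
      TT_succ hn hp v]
    have : ((Finset.range p.length).filter
        (fun i => decide ((level k n (p.take i), p.getD i true).1 = c) = true)).card
        = ((Finset.range p.length).filter (fun i => rl k p i = (v:ℤ))).card := by
      apply congrArg
      apply Finset.filter_congr
      intro i _
      simp only [decide_eq_true_eq]
      exact key_eq hn hp v i
    omega
  have hBne : B ≠ [] := by
    intro hnil
    rw [hnil] at hlenB
    simp at hlenB
    omega
  -- decompose sweep and compute the letter
  have hd := sorted_decomp (sweep k n p) (sweep_sorted k n p) c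
  rw [← hB] at hd
  have hlenA : ((sweep k n p).filter (fun a => decide (a.1 < c))).length = TT k p v := by
    rw [← List.countP_eq_length_filter]
    exact countP_sweep_lt hn hp v
  obtain ⟨b, B', hBcons⟩ := List.exists_cons_of_ne_nil hBne
  have hd2 : sweep k n p = (sweep k n p).filter (fun a => decide (a.1 < c)) ++
      (b :: (B' ++ (sweep k n p).filter (fun a => decide (c < a.1)))) := by
    conv_lhs => rw [hd]
    rw [hBcons]
    simp [List.append_assoc]
  have hgd : (sweepWord k n p).getD (TT k p v) true = b.2 := by
    rw [sweepWord_eq]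
    conv_lhs => rw [hd2]
    rw [List.map_append,
      List.getD_append_right _ _ _ _ (le_of_eq (by rw [List.length_map, hlenA])),
      List.length_map, hlenA, Nat.sub_self]
    simp
  -- identify b as the step of maximal index at level v
  set RL := (List.range p.length).reverse.filter (fun i => decide (rl k p i = (v:ℤ))) with hRL
  have hRLne : RL ≠ [] := by
    intro hnil
    rw [hBmap, hnil] at hBcons
    simp at hBcons
  obtain ⟨j, tl, hRLcons⟩ := List.exists_cons_of_ne_nil hRLne
  have hbj : b = (level k n (p.take j), p.getD j true) := by
    rw [hBmap, hRLcons, List.map_cons] at hBcons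
    exact (List.cons_eq_cons.mp hBcons).1.symm
  have hjmem : j ∈ RL := by rw [hRLcons]; exact List.mem_cons_self
  have hjprop : j < p.length ∧ rl k p j = (v:ℤ) := by
    have h1 := List.mem_of_mem_filter hjmem
    have h2 := List.of_mem_filter hjmem
    simp only [List.mem_reverse, List.mem_range] at h1
    simp only [decide_eq_true_eq] at h2
    exact ⟨h1, h2⟩
  have hjmax : ∀ i ∈ tl, i < j := by
    have hpw : RL.Pairwise (fun a b => b < a) := by
      apply List.Pairwise.sublist List.filter_sublist
      rw [List.pairwise_reverse]
      simpa using List.pairwise_lt_range (n := p.length)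
    rw [hRLcons, List.pairwise_cons] at hpw
    exact hpw.1
  -- the maximal step at level v is an east step
  have hE : p.getD j true = false := by
    by_contra hbc
    have hbc2 : p.getD j true = true := by revert hbc; cases (p.getD j true) <;> simp
    have hstep := rl_succ k p j hjprop.1
    rw [hbc2, if_pos rfl, hjprop.2] at hstep
    have hgt : (v:ℤ) < rl k p (j+1) := by
      rw [hstep]
      have : (1:ℤ) ≤ (k:ℤ) := by exact_mod_cast hk
      omega
    obtain ⟨j', hjj', hj'L, hj'⟩ := reach hn hp (v:ℤ) (by exact_mod_cast hv) (j+1) hgt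
    have hj'mem : j' ∈ RL := by
      rw [hRL]
      apply List.mem_filter_of_mem
      · rw [List.mem_reverse, List.mem_range]; exact hj'L
      · simp [hj']
    rw [hRLcons] at hj'mem
    rcases List.mem_cons.1 hj'mem with he | htl
    · omega
    · have := hjmax j' htl
      omega
  rw [hgd, hbj, hE]
end Letter

section Unique
variable {k n : ℕ} {p q : List Bool}

lemma TT_aux (hn : 0 < n) (hk : 1 ≤ k) (hp : IsDyck k n p) (hq : IsDyck k n q)
    (hσ : sweepWord k n p = sweepWord k n q) (v1 : ℕ)
    (hmin : ∀ v < v1, TT k p v = TT k q v) (hlt : TT k q v1 < TT k p v1) : False := by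
  classical
  set σ := sweepWord k n p with hσdef
  have hσlen : σ.length = p.length := by
    rw [hσdef, sweepWord_eq, List.length_map, sweep_eq, List.length_mergeSort, inp,
      List.length_map, List.length_reverse, List.length_range]
  have hlen : p.length = q.length := by
    rw [length_eq hn hp, length_eq hn hq]
  -- counting functions along the common word
  set W : ℕ → ℕ := fun x => (σ.take x).count false with hW
  set Nc : ℕ → ℕ := fun x => (σ.take x).count true with hNc
  have Wmono : ∀ {x y}, x ≤ y → W x ≤ W y := by
    intro x y hxy
    have : σ.take x = (σ.take y).take x := by rw [List.take_take, min_eq_left hxy]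
    rw [hW]
    simp only
    rw [this]
    exact (List.take_sublist _ _).count_le false
  have Ncmono : ∀ {x y}, x ≤ y → Nc x ≤ Nc y := by
    intro x y hxy
    have : σ.take x = (σ.take y).take x := by rw [List.take_take, min_eq_left hxy]
    rw [hNc]
    simp only
    rw [this]
    exact (List.take_sublist _ _).count_le true
  have bridgePE : ∀ v, W (TT k p v) = EE k p v := fun v => count_take_false hn hp v
  have bridgePN : ∀ v, Nc (TT k p v) = NN k p v := fun v => count_take_true hn hp v
  have bridgeQE : ∀ v, W (TT k q v) = EE k q v := by
    intro v
    have h := count_take_false hn hq v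
    rw [← hσ] at h
    exact h
  have bridgeQN : ∀ v, Nc (TT k q v) = NN k q v := by
    intro v
    have h := count_take_true hn hq v
    rw [← hσ] at h
    exact h
  have hv1 : 1 ≤ v1 := by
    rcases Nat.eq_zero_or_pos v1 with h0 | h1
    · rw [h0, TT_zero hn hp, TT_zero hn hq] at hlt; omega
    · exact h1
  -- the first letter of the gap is a W
  have hqlen : TT k q v1 < q.length := by
    have := TT_le_length k p v1
    omega
  have hqne : TT k q v1 < TT k q (v1+1) := block_nonempty hn hq v1 hv1 hqlen
  have hletter : σ.getD (TT k q v1) true = false := by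
    rw [hσ]
    exact letter_lemma hn hq hk v1 hv1 hqne
  have hσq : TT k q v1 < σ.length := by rw [hσlen, hlen]; exact hqlen
  have hWsucc : W (TT k q v1 + 1) = W (TT k q v1) + 1 := by
    rw [hW]
    simp only
    rw [List.take_succ]
    have : σ[TT k q v1]? = some false := by
      rw [List.getElem?_eq_getElem hσq]
      rw [List.getD_eq_getElem _ _ hσq] at hletter
      rw [hletter]
    rw [this]
    simp [List.count_append]
  have hb1 : EE k q v1 + 1 ≤ EE k p v1 := by
    have h1 : W (TT k q v1 + 1) ≤ W (TT k p v1) := Wmono (by omega)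
    rw [bridgePE, hWsucc, bridgeQE] at h1
    omega
  -- difference functions
  set b : ℕ → ℤ := fun v => (EE k p v : ℤ) - (EE k q v : ℤ) with hb
  set α : ℕ → ℤ := fun v => (NN k p v : ℤ) - (NN k q v : ℤ) with hα
  have hα0 : ∀ v < v1, α v = 0 ∧ b v = 0 := by
    intro v hv
    have hTT := hmin v hv
    constructor
    · rw [hα]; simp only
      rw [← bridgePN, ← bridgeQN, hTT]; omega
    · rw [hb]; simp only
      rw [← bridgePE, ← bridgeQE, hTT]; omega
  have hstep : ∀ v, 1 ≤ b v → TT k q v < TT k p v ∧ 0 ≤ α v := by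
    intro v hbv
    have h1 : W (TT k q v) < W (TT k p v) := by
      rw [bridgePE, bridgeQE]
      rw [hb] at hbv; simp only at hbv
      omega
    have h2 : TT k q v < TT k p v := by
      by_contra hc
      push_neg at hc
      exact absurd (Wmono hc) (by omega)
    refine ⟨h2, ?_⟩
    have := Ncmono h2.le
    rw [bridgePN, bridgeQN] at this
    rw [hα]; simp only
    omega
  have hrec : ∀ v, 1 ≤ v → b (v+1) = b v + α v - α (v - k) := by
    intro v hv
    have h1 := crossing hn hp v hv
    have h2 := crossing hn hq v hv
    rw [hb, hα]; simp only
    omega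
  -- main induction
  have main : ∀ v, ∀ u, v1 ≤ u → u ≤ v →
      (1 ≤ b u ∧ b u = b v1 + ∑ w ∈ Finset.Ico (max v1 (u - k)) u, α w) := by
    intro v
    induction v with
    | zero =>
      intro u h1 h2
      omega
    | succ v ih =>
      intro u h1 h2
      rcases Nat.lt_or_ge u (v+1) with hu | hu
      · exact ih u h1 (by omega)
      · have huv : u = v + 1 := by omega
        subst huv
        rcases Nat.eq_or_lt_of_le h1 with he | hgt
        · -- u = v1 : base case
          rw [← he]
          have hmax : max v1 (v1 - k) = v1 := by omega
          rw [hmax, Finset.Ico_self, Finset.sum_empty]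
          have : 1 ≤ b v1 := by
            rw [hb]; simp only; omega
          exact ⟨this, by omega⟩
        · -- u = v+1 > v1
          have hvv1 : v1 ≤ v := by omega
          obtain ⟨hbv, hFv⟩ := ih v hvv1 (le_refl v)
          have hbrec := hrec v (by omega)
          have hF : b (v+1) = b v1 + ∑ w ∈ Finset.Ico (max v1 (v + 1 - k)) (v+1), α w := by
            rcases Nat.lt_or_ge (v - k) v1 with hA | hB
            · have hz : α (v - k) = 0 := (hα0 _ hA).1
              have hm1 : max v1 (v - k) = v1 := by omega
              have hm2 : max v1 (v + 1 - k) = v1 := by omega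
              rw [hm2, Finset.sum_Ico_succ_top hvv1]
              rw [hm1] at hFv
              omega
            · have hm1 : max v1 (v - k) = v - k := by omega
              have hm2 : max v1 (v + 1 - k) = v - k + 1 := by omega
              have hkv : v - k < v := by omega
              rw [hm1] at hFv
              rw [Finset.sum_eq_sum_Ico_succ_bot hkv] at hFv
              rw [hm2, Finset.sum_Ico_succ_top (by omega : v - k + 1 ≤ v)]
              omega
          refine ⟨?_, hF⟩
          rw [hF]
          have hsum : 0 ≤ ∑ w ∈ Finset.Ico (max v1 (v + 1 - k)) (v+1), α w := by
            apply Finset.sum_nonneg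
            intro w hw
            rw [Finset.mem_Ico] at hw
            have hw1 : v1 ≤ w := le_trans (le_max_left _ _) hw.1
            exact (hstep w (ih w hw1 (by omega)).1).2
          have : 1 ≤ b v1 := by rw [hb]; simp only; omega
          omega
  -- contradiction at the top
  set V := k * n + 1 with hV
  have hTTV : TT k p V = TT k q V := by
    rw [TT_top hn hp V (le_refl _), TT_top hn hq V (le_refl _), hlen]
  have hv1V : v1 ≤ V := by
    by_contra hc
    push_neg at hc
    have h1 : TT k p v1 = p.length := TT_top hn hp v1 (by omega)
    have h2 : TT k q v1 = q.length := TT_top hn hq v1 (by omega)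
    omega
  have hmain := (main V V hv1V (le_refl V)).1
  have hbV : b V = 0 := by
    rw [hb]; simp only
    rw [← bridgePE, ← bridgeQE, hTTV]
    omega
  omega

lemma TT_unique (hn : 0 < n) (hk : 1 ≤ k) (hp : IsDyck k n p) (hq : IsDyck k n q)
    (hσ : sweepWord k n p = sweepWord k n q) : ∀ v, TT k p v = TT k q v := by
  by_contra hc
  push_neg at hc
  obtain ⟨v0, hv0⟩ := hc
  have hex : ∃ v, TT k p v ≠ TT k q v := ⟨v0, hv0⟩
  classical
  set v1 := Nat.find hex with hv1
  have hspec := Nat.find_spec hex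
  rw [← hv1] at hspec
  have hmin : ∀ v < v1, TT k p v = TT k q v := by
    intro v hv
    by_contra hne
    exact absurd (Nat.find_le hne : v1 ≤ v) (by omega)
  rcases Nat.lt_or_ge (TT k q v1) (TT k p v1) with h | h
  · exact TT_aux hn hk hp hq hσ v1 hmin h
  · have h' : TT k p v1 < TT k q v1 := by omega
    exact TT_aux hn hk hq hp hσ.symm v1 (fun v hv => (hmin v hv).symm) h'

end Unique

section Recon
variable {k n : ℕ} {p : List Bool} (hn : 0 < n) (hp : IsDyck k n p)
include hn hp

lemma blk_len (v : ℕ) :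
    ((sweep k n p).filter (fun a => decide (a.1 = (n:ℤ)*v))).length
      = TT k p (v+1) - TT k p v := by
  rw [← List.countP_eq_length_filter, (sweep_perm k n p).countP_eq, countP_inp,
    TT_succ hn hp v]
  have : ((Finset.range p.length).filter
      (fun i => decide ((level k n (p.take i), p.getD i true).1 = (n:ℤ)*v) = true)).card
      = ((Finset.range p.length).filter (fun i => rl k p i = (v:ℤ))).card := by
    apply congrArg
    apply Finset.filter_congr
    intro i _
    simp only [decide_eq_true_eq]
    exact key_eq hn hp v i
  omega

lemma block_word (v : ℕ) :
    ((inp k n p).filter (fun a => decide (a.1 = (n:ℤ)*v))).map Prod.snd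
      = ((sweepWord k n p).drop (TT k p v)).take (TT k p (v+1) - TT k p v) := by
  rw [← stable_filter k n p ((n:ℤ)*v)]
  have hd := sorted_decomp (sweep k n p) (sweep_sorted k n p) ((n:ℤ)*v)
  have hlenA : ((sweep k n p).filter (fun a => decide (a.1 < (n:ℤ)*v))).length = TT k p v := by
    rw [← List.countP_eq_length_filter]
    exact countP_sweep_lt hn hp v
  have hlenB := blk_len hn hp v
  conv_rhs => rw [sweepWord_eq, hd]
  rw [List.append_assoc, List.map_append, List.map_append,
    List.drop_left' (by rw [List.length_map, hlenA]),
    List.take_left' (by rw [List.length_map, hlenB])]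

end Recon

/-- the list of step letters at start level `v`, rightmost first, of a word started at level `s` -/
def blkB (k : ℕ) (v s : ℤ) (w : List Bool) : List Bool :=
  ((List.range w.length).reverse.filter (fun i =>
      decide (s + ((k:ℤ) * (((w.take i).count true : ℕ) : ℤ)
        - (((w.take i).count false : ℕ) : ℤ)) = v))).map
    (fun i => w.getD i true)

lemma blkB_nil (k : ℕ) (v s : ℤ) : blkB k v s [] = [] := by simp [blkB]

lemma blkB_cons (k : ℕ) (v s : ℤ) (c : Bool) (w : List Bool) :
    blkB k v s (c :: w) = blkB k v (s + (if c then (k:ℤ) else -1)) w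
      ++ (if s = v then [c] else []) := by
  rw [blkB, List.length_cons, List.range_succ_eq_map, List.reverse_cons',
    List.concat_eq_append, ← List.map_reverse, List.filter_append, List.map_append]
  congr 1
  · -- indices ≥ 1
    rw [List.filter_map, List.map_map, blkB]
    have hcongr : ∀ i ∈ (List.range w.length).reverse,
        ((fun i => decide (s + ((k:ℤ) * (((((c :: w).take i).count true : ℕ)) : ℤ)
          - (((((c :: w).take i).count false : ℕ)) : ℤ)) = v)) ∘ Nat.succ) i
        = decide ((s + (if c then (k:ℤ) else -1)) + ((k:ℤ) * ((((w.take i).count true : ℕ)) : ℤ)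
          - ((((w.take i).count false : ℕ)) : ℤ)) = v) := by
      intro i _
      simp only [Function.comp, List.take_succ_cons, List.count_cons]
      apply decide_eq_decide.mpr
      rcases c <;> simp <;> push_cast <;> constructor <;> intro h <;> linarith
    rw [List.filter_congr hcongr]
    apply List.map_congr_left
    intro i _
    simp
  · -- index 0
    simp only [List.filter_cons, List.take_zero, List.count_nil]
    push_cast
    simp only [mul_zero, sub_zero, add_zero, List.filter_nil]
    rcases hsv : decide (s = v) with _ | _
    · simp only [decide_eq_false_iff_not] at hsv
      simp [hsv]
    · simp only [decide_eq_true_eq] at hsv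
      simp [hsv]
lemma blkB_inj (k : ℕ) : ∀ (w w' : List Bool) (s : ℤ),
    (∀ v, blkB k v s w = blkB k v s w') → w = w'
  | [], [], _, _ => rfl
  | [], c :: u, s, h => by
    exfalso
    have := h s
    rw [blkB_nil, blkB_cons, if_pos rfl] at this
    simp at this
  | c :: u, [], s, h => by
    exfalso
    have := h s
    rw [blkB_nil, blkB_cons, if_pos rfl] at this
    simp at this
  | c :: u, d :: u', s, h => by
    have hs := h s
    rw [blkB_cons, blkB_cons, if_pos rfl, if_pos rfl] at hs
    have hcd : c = d := by
      have h1 := congrArg (fun l => l.getLast? ) hs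
      simp only [List.getLast?_concat] at h1
      exact Option.some_injective _ h1
    subst hcd
    have htail : blkB k s (s + (if c then (k:ℤ) else -1)) u
        = blkB k s (s + (if c then (k:ℤ) else -1)) u' := by
      have := List.append_inj' hs rfl
      exact this.1
    have hrest : ∀ v, blkB k v (s + (if c then (k:ℤ) else -1)) u
        = blkB k v (s + (if c then (k:ℤ) else -1)) u' := by
      intro v
      rcases eq_or_ne v s with he | hne
      · rw [he]; exact htail
      · have hv := h v
        rw [blkB_cons, blkB_cons] at hv
        have hz : (if s = v then [c] else []) = ([] : List Bool) :=
          if_neg (fun hh => hne hh.symm)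
        rw [hz, List.append_nil, List.append_nil] at hv
        exact hv
    have := blkB_inj k u u' _ hrest
    rw [this]

section Recon2
variable {k n : ℕ} {p : List Bool} (hn : 0 < n) (hp : IsDyck k n p)
include hn hp

lemma blkB_neg (v : ℤ) (hv : v < 0) : blkB k v 0 p = [] := by
  rw [blkB, List.map_eq_nil_iff, List.filter_eq_nil_iff]
  intro i _
  simp only [decide_eq_true_eq, zero_add]
  intro hc
  have := rl_nonneg hn hp i
  rw [rl] at this
  omega

lemma blkB_eq_block (v : ℕ) :
    blkB k (v:ℤ) 0 p = ((inp k n p).filter (fun a => decide (a.1 = (n:ℤ)*v))).map Prod.snd := by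
  rw [inp, List.filter_map, List.map_map, blkB]
  have hcongr : ∀ i ∈ (List.range p.length).reverse,
      (fun i => decide ((0:ℤ) + ((k:ℤ) * (((p.take i).count true : ℕ) : ℤ)
        - ((((p.take i).count false : ℕ)) : ℤ)) = (v:ℤ))) i
      = ((fun a : ℤ × Bool => decide (a.1 = (n:ℤ)*v)) ∘
          (fun i => (level k n (p.take i), p.getD i true))) i := by
    intro i _
    simp only [Function.comp, zero_add]
    apply decide_eq_decide.mpr
    rw [key_eq hn hp v i, rl]
  rw [List.filter_congr hcongr]
  apply List.map_congr_left
  intro i _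
  simp
end Recon2

/-- The sweep map is injective on `(kn,n)`-Dyck paths: two `(kn,n)`-Dyck paths with the
same sweep-map output word are equal. -/
theorem stmt10 (k n : ℕ) (hn : 0 < n) (p q : List Bool)
    (hp : IsDyck k n p) (hq : IsDyck k n q)
    (h : sweepWord k n p = sweepWord k n q) : p = q := by
  rcases Nat.eq_zero_or_pos k with hk0 | hk
  · -- k = 0 : both paths are all norths
    subst hk0
    have hp' : p = List.replicate n true := by
      rw [List.eq_replicate_iff]
      constructor
      · rw [length_word p, hp.1, hp.2.1]; omega
      · intro b hb
        rcases b
        · exfalso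
          have : 0 < p.count false := List.count_pos_iff.mpr hb
          rw [hp.2.1] at this; omega
        · rfl
    have hq' : q = List.replicate n true := by
      rw [List.eq_replicate_iff]
      constructor
      · rw [length_word q, hq.1, hq.2.1]; omega
      · intro b hb
        rcases b
        · exfalso
          have : 0 < q.count false := List.count_pos_iff.mpr hb
          rw [hq.2.1] at this; omega
        · rfl
    rw [hp', hq']
  · have hTT := TT_unique hn hk hp hq h
    apply blkB_inj k p q 0
    intro v
    rcases lt_or_ge v 0 with hv | hv
    · rw [blkB_neg hn hp v hv, blkB_neg hn hq v hv]
    · obtain ⟨m, rfl⟩ : ∃ m : ℕ, v = (m : ℤ) := ⟨v.toNat, (Int.toNat_of_nonneg hv).symm⟩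
      rw [blkB_eq_block hn hp m, blkB_eq_block hn hq m, block_word hn hp m,
        block_word hn hq m, hTT m, hTT (m+1), h]
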